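/- Achievability direction for conditional excess distortion: given any Q on Y with 0 < Q(B_d(x)) < 1 for all relevant x, the kernel K(x) defined by placing mass α_Q(x) on Q restricted to B_d(x) (normalized) and mass 1-α_Q(x) on Q restricted to the complement (normalized), with α_Q(x) = max{1-ε, Q(B_d(x))}, satisfies K(x)(B_d(x)ᶜ) ≤ ε and D(K(x)‖Q) = d(α_Q(x)‖Q(B_d(x))); hence R_X^c(d,ε) ≤ E[d(α_Q(X)‖Q(B_d(X)))] for every such Q, giving R_X^c(d,ε) ≤ R_X^{c,+}(d,ε). -/

import Mathlib

noncomputable section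

/-- `q` is a probability mass function on the finite alphabet `α`. -/
def isPMF {α : Type*} [Fintype α] (q : α → ℝ) : Prop :=
  (∀ a, 0 ≤ q a) ∧ ∑ a, q a = 1

/-- Shannon entropy (in bits) of a pmf on a finite alphabet. -/
def ent {α : Type*} [Fintype α] (q : α → ℝ) : ℝ :=
  ∑ a, -(q a * Real.logb 2 (q a))

/-- Relative entropy (Kullback–Leibler divergence, in bits) between pmfs. -/
def klDiv {α : Type*} [Fintype α] (μ ν : α → ℝ) : ℝ :=
  ∑ a, μ a * Real.logb 2 (μ a / ν a)

/-- Probability, under `Q`, of the distortion-`D` ball around `x`: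
`Q(B_D(x)) = Q {y : df x y ≤ D}`. -/
def probBall {X Y : Type*} [Fintype Y] (Q : Y → ℝ) (df : X → Y → ℝ) (D : ℝ) (x : X) : ℝ :=
  ∑ y, if df x y ≤ D then Q y else 0

/-- Output marginal `P_Y` induced by input pmf `p` and kernel `K`. -/
def marg {X Y : Type*} [Fintype X] [Fintype Y] (p : X → ℝ) (K : X → Y → ℝ) : Y → ℝ :=
  fun y => ∑ x, p x * K x y

/-- Mutual information (in bits) `I(X;Y)` of the joint law `p ⊗ K`,
written as `E_X [ D(K(X) ‖ P_Y) ]`. -/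
def mutInfo {X Y : Type*} [Fintype X] [Fintype Y] (p : X → ℝ) (K : X → Y → ℝ) : ℝ :=
  ∑ x, p x * klDiv (K x) (marg p K)

/-- Binary relative entropy `d(α‖q)` (in bits). -/
def bdiv (a q : ℝ) : ℝ :=
  a * Real.logb 2 (a / q) + (1 - a) * Real.logb 2 ((1 - a) / (1 - q))


section Aux

open Finset

/-- Gibbs' inequality: relative entropy is nonnegative. -/
lemma gibbs_nonneg {Y : Type*} [Fintype Y] (mu nu : Y → ℝ)
    (hmu0 : ∀ y, 0 ≤ mu y) (hnu0 : ∀ y, 0 ≤ nu y)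
    (hmu1 : ∑ y, mu y = 1) (hnu1 : ∑ y, nu y ≤ 1)
    (hsupp : ∀ y, nu y = 0 → mu y = 0) : 0 ≤ klDiv mu nu := by
  have hlog2 : 0 < Real.log 2 := Real.log_pos (by norm_num)
  have key : ∀ y, mu y - nu y ≤ mu y * Real.log (mu y / nu y) := by
    intro y
    rcases eq_or_lt_of_le (hmu0 y) with h | h
    · rw [← h]; simpa using hnu0 y
    · have hnu : 0 < nu y := lt_of_le_of_ne (hnu0 y)
        (fun h0 => by have := hsupp y h0.symm; linarith)
      have h1 : Real.log (nu y / mu y) ≤ nu y / mu y - 1 :=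
        Real.log_le_sub_one_of_pos (by positivity)
      have h2 : Real.log (mu y / nu y) = - Real.log (nu y / mu y) := by
        rw [← Real.log_inv]; congr 1; rw [inv_div]
      have h3 : mu y * Real.log (nu y / mu y) ≤ mu y * (nu y / mu y - 1) :=
        mul_le_mul_of_nonneg_left h1 h.le
      have h4 : mu y * (nu y / mu y - 1) = nu y - mu y := by field_simp
      rw [h2]; nlinarith
  have hsumlog : 1 - ∑ y, nu y ≤ ∑ y, mu y * Real.log (mu y / nu y) := by
    rw [← hmu1, ← Finset.sum_sub_distrib]
    exact Finset.sum_le_sum fun y _ => key y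
  have hsum : 0 ≤ ∑ y, mu y * Real.log (mu y / nu y) := by linarith
  have hrw : klDiv mu nu = (∑ y, mu y * Real.log (mu y / nu y)) / Real.log 2 := by
    rw [klDiv, Finset.sum_div]
    apply Finset.sum_congr rfl; intro y _
    rw [Real.logb, mul_div_assoc]
  rw [hrw]; positivity

lemma probBall_le_one {X Y : Type*} [Fintype Y] (Q : Y → ℝ) (hQ : isPMF Q)
    (df : X → Y → ℝ) (D : ℝ) (x : X) : probBall Q df D x ≤ 1 := by
  have h : probBall Q df D x ≤ ∑ y, Q y := by
    apply Finset.sum_le_sum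
    intro y _
    by_cases h : df x y ≤ D <;> simp [h, hQ.1 y]
  rw [hQ.2] at h; exact h

/-- Main computation about the mixture kernel at one point `x`. -/
lemma mix_lemma {X Y : Type*} [Fintype Y] (Q : Y → ℝ) (hQ : isPMF Q)
    (df : X → Y → ℝ) (D : ℝ) (x : X) (a : ℝ) (K1 : Y → ℝ)
    (hq0 : 0 < probBall Q df D x) (hq1 : probBall Q df D x < 1)
    (ha0 : 0 < a) (ha1 : a ≤ 1)
    (hK1 : ∀ y, K1 y = a * (if df x y ≤ D then Q y else 0) / probBall Q df D x
      + (1 - a) * (if df x y ≤ D then 0 else Q y) / (1 - probBall Q df D x)) :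
    isPMF K1 ∧ probBall K1 df D x = a ∧ klDiv K1 Q = bdiv a (probBall Q df D x) := by
  set q := probBall Q df D x with hq
  have hqne : q ≠ 0 := ne_of_gt hq0
  have hq1ne : (1 : ℝ) - q ≠ 0 := ne_of_gt (by linarith)
  have hqdef : q = ∑ y, if df x y ≤ D then Q y else 0 := rfl
  have hcompl : ∑ y, (if df x y ≤ D then 0 else Q y) = 1 - q := by
    have h : ∑ y, ((if df x y ≤ D then Q y else 0) + (if df x y ≤ D then 0 else Q y)) = 1 := by
      rw [← hQ.2]
      apply Finset.sum_congr rfl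
      intro y _
      by_cases h : df x y ≤ D <;> simp [h]
    rw [Finset.sum_add_distrib, ← hqdef] at h
    linarith
  have hnn : ∀ y, 0 ≤ K1 y := by
    intro y
    have h0 := hQ.1 y
    rw [hK1 y]
    by_cases h : df x y ≤ D
    · simp only [h, if_true, mul_zero, zero_div, add_zero]
      exact div_nonneg (mul_nonneg ha0.le h0) hq0.le
    · simp only [h, if_false, mul_zero, zero_div, zero_add]
      exact div_nonneg (mul_nonneg (by linarith) h0) (by linarith)
  have hsum : ∑ y, K1 y = 1 := by
    calc ∑ y, K1 y = ∑ y, (a / q * (if df x y ≤ D then Q y else 0)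
        + (1 - a) / (1 - q) * (if df x y ≤ D then 0 else Q y)) := by
          apply Finset.sum_congr rfl; intro y _; rw [hK1 y]; ring
    _ = a / q * q + (1 - a) / (1 - q) * (1 - q) := by
        rw [Finset.sum_add_distrib, ← Finset.mul_sum, ← Finset.mul_sum, ← hqdef, hcompl]
    _ = 1 := by field_simp; ring
  have hb : probBall K1 df D x = a := by
    have hterm : ∀ y, (if df x y ≤ D then K1 y else 0)
        = a / q * (if df x y ≤ D then Q y else 0) := by
      intro y
      by_cases h : df x y ≤ D <;> simp only [h, if_true, if_false, hK1 y] <;> ring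
    calc probBall K1 df D x = ∑ y, a / q * (if df x y ≤ D then Q y else 0) :=
        Finset.sum_congr rfl fun y _ => hterm y
    _ = a / q * q := by rw [← Finset.mul_sum, ← hqdef]
    _ = a := div_mul_cancel₀ a hqne
  have hc : klDiv K1 Q = bdiv a q := by
    have hterm : ∀ y, K1 y * Real.logb 2 (K1 y / Q y) =
        (if df x y ≤ D then Q y else 0) * (a / q * Real.logb 2 (a / q)) +
        (if df x y ≤ D then 0 else Q y) *
          ((1 - a) / (1 - q) * Real.logb 2 ((1 - a) / (1 - q))) := by
      intro y
      by_cases h : df x y ≤ D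
      · simp only [hK1 y, h, if_true, mul_zero, zero_div, add_zero, zero_mul]
        rcases eq_or_ne (Q y) 0 with h0 | h0
        · simp [h0]
        · have he : a * Q y / q / Q y = a / q := by field_simp
          rw [he]; ring
      · simp only [hK1 y, h, if_false, mul_zero, zero_div, zero_add, zero_mul]
        rcases eq_or_ne (Q y) 0 with h0 | h0
        · simp [h0]
        · have he : (1 - a) * Q y / (1 - q) / Q y = (1 - a) / (1 - q) := by field_simp
          rw [he]; ring
    calc klDiv K1 Q = ∑ y, ((if df x y ≤ D then Q y else 0) * (a / q * Real.logb 2 (a / q)) +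
        (if df x y ≤ D then 0 else Q y) *
          ((1 - a) / (1 - q) * Real.logb 2 ((1 - a) / (1 - q)))) :=
        Finset.sum_congr rfl fun y _ => hterm y
    _ = q * (a / q * Real.logb 2 (a / q)) +
        (1 - q) * ((1 - a) / (1 - q) * Real.logb 2 ((1 - a) / (1 - q))) := by
        rw [Finset.sum_add_distrib, ← Finset.sum_mul, ← Finset.sum_mul, ← hqdef, hcompl]
    _ = bdiv a q := by rw [bdiv]; field_simp
  exact ⟨⟨hnn, hsum⟩, hb, hc⟩

lemma marg_pmf {X Y : Type*} [Fintype X] [Fintype Y] (p : X → ℝ) (K : X → Y → ℝ)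
    (hp : isPMF p) (hK : ∀ x, isPMF (K x)) : isPMF (marg p K) := by
  constructor
  · intro y; exact Finset.sum_nonneg fun x _ => mul_nonneg (hp.1 x) ((hK x).1 y)
  · have h : ∑ y, marg p K y = ∑ x, ∑ y, p x * K x y := Finset.sum_comm
    rw [h]
    calc ∑ x, ∑ y, p x * K x y = ∑ x, p x :=
        Finset.sum_congr rfl fun x _ => by rw [← Finset.mul_sum, (hK x).2, mul_one]
    _ = 1 := hp.2

lemma mutInfo_nonneg' {X Y : Type*} [Fintype X] [Fintype Y] (p : X → ℝ) (K : X → Y → ℝ)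
    (hp : isPMF p) (hK : ∀ x, isPMF (K x)) : 0 ≤ mutInfo p K := by
  have hm := marg_pmf p K hp hK
  apply Finset.sum_nonneg
  intro x _
  rcases eq_or_lt_of_le (hp.1 x) with hpx | hpx
  · rw [← hpx, zero_mul]
  apply mul_nonneg hpx.le
  apply gibbs_nonneg (K x) (marg p K) (hK x).1 hm.1 (hK x).2 (le_of_eq hm.2)
  intro y hy
  have hy' : ∑ x', p x' * K x' y = 0 := hy
  have h0 : ∀ x' ∈ Finset.univ, 0 ≤ p x' * K x' y :=
    fun x' _ => mul_nonneg (hp.1 x') ((hK x').1 y)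
  have hz := (Finset.sum_eq_zero_iff_of_nonneg h0).mp hy' x (Finset.mem_univ x)
  rcases mul_eq_zero.mp hz with h | h
  · linarith
  · exact h

/-- Golden formula: `I(X;Y) ≤ E[D(K(X)‖Q)]` for any reference `Q`. -/
lemma golden {X Y : Type*} [Fintype X] [Fintype Y] (p : X → ℝ) (K : X → Y → ℝ) (Q : Y → ℝ)
    (hp : isPMF p) (hK : ∀ x, isPMF (K x)) (hQ : isPMF Q)
    (hsupp : ∀ x y, Q y = 0 → K x y = 0) :
    mutInfo p K ≤ ∑ x, p x * klDiv (K x) Q := by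
  have hm := marg_pmf p K hp hK
  have hmsupp : ∀ y, Q y = 0 → marg p K y = 0 := by
    intro y h
    apply Finset.sum_eq_zero
    intro x _
    rw [hsupp x y h, mul_zero]
  have hklm : 0 ≤ klDiv (marg p K) Q :=
    gibbs_nonneg (marg p K) Q hm.1 hQ.1 hm.2 (le_of_eq hQ.2) hmsupp
  have hterm : ∀ x y, p x * (K x y * Real.logb 2 (K x y / Q y)) =
      p x * (K x y * Real.logb 2 (K x y / marg p K y)) +
        p x * K x y * Real.logb 2 (marg p K y / Q y) := by
    intro x y
    rcases eq_or_lt_of_le (hp.1 x) with hx | hx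
    · rw [← hx]; ring
    rcases eq_or_lt_of_le ((hK x).1 y) with hk | hk
    · rw [← hk]; ring
    have hQy : 0 < Q y := lt_of_le_of_ne (hQ.1 y)
      (fun h => by have := hsupp x y h.symm; linarith)
    have hmy : 0 < marg p K y := by
      have h1 : p x * K x y ≤ marg p K y :=
        Finset.single_le_sum (f := fun x' => p x' * K x' y)
          (fun x' _ => mul_nonneg (hp.1 x') ((hK x').1 y)) (Finset.mem_univ x)
      nlinarith
    rw [Real.logb_div hk.ne' hQy.ne', Real.logb_div hk.ne' hmy.ne',
      Real.logb_div hmy.ne' hQy.ne']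
    ring
  have h1 : ∑ x, p x * klDiv (K x) Q
      = ∑ x, ∑ y, p x * (K x y * Real.logb 2 (K x y / Q y)) :=
    Finset.sum_congr rfl fun x _ => by rw [klDiv, Finset.mul_sum]
  have h2 : mutInfo p K = ∑ x, ∑ y, p x * (K x y * Real.logb 2 (K x y / marg p K y)) :=
    Finset.sum_congr rfl fun x _ => by rw [klDiv, Finset.mul_sum]
  have h3 : klDiv (marg p K) Q
      = ∑ x, ∑ y, p x * K x y * Real.logb 2 (marg p K y / Q y) := by
    rw [klDiv, Finset.sum_comm]
    apply Finset.sum_congr rfl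
    intro y _
    rw [eq_comm, ← Finset.sum_mul]
    rfl
  have hiden : ∑ x, p x * klDiv (K x) Q = mutInfo p K + klDiv (marg p K) Q := by
    rw [h1, h2, h3, ← Finset.sum_add_distrib]
    apply Finset.sum_congr rfl
    intro x _
    rw [← Finset.sum_add_distrib]
    exact Finset.sum_congr rfl fun y _ => hterm x y
  linarith

lemma klDiv_self' {Y : Type*} [Fintype Y] (Q : Y → ℝ) : klDiv Q Q = 0 := by
  apply Finset.sum_eq_zero
  intro y _
  rcases eq_or_ne (Q y) 0 with h | h
  · simp [h]
  · simp [div_self h]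

lemma bdiv_one_one : bdiv 1 1 = 0 := by simp [bdiv]

open scoped Classical in
/-- The mixture kernel built from a reference `Q`, patched with `Q` itself in degenerate cases. -/
def mixK {X Y : Type*} [Fintype Y] (Q : Y → ℝ) (df : X → Y → ℝ) (D ε : ℝ) (x : X) (y : Y) : ℝ :=
  if 0 < probBall Q df D x ∧ probBall Q df D x < 1 then
    max (1 - ε) (probBall Q df D x) * (if df x y ≤ D then Q y else 0) / probBall Q df D x +
      (1 - max (1 - ε) (probBall Q df D x)) * (if df x y ≤ D then 0 else Q y) /
        (1 - probBall Q df D x)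
  else Q y

lemma key_lemma {X Y : Type*} [Fintype X] [Fintype Y] (p : X → ℝ) (df : X → Y → ℝ) (D ε : ℝ)
    (hε0 : 0 < ε) (hε1 : ε < 1) (hp : isPMF p) (Q : Y → ℝ) (hQ : isPMF Q)
    (hQpos : ∀ x, 0 < p x → 0 < probBall Q df D x) :
    sInf {r : ℝ | ∃ K' : X → Y → ℝ, (∀ x, isPMF (K' x)) ∧
        (∀ x, 0 < p x → 1 - ε ≤ probBall (K' x) df D x) ∧ r = mutInfo p K'} ≤
      ∑ x, p x * bdiv (max (1 - ε) (probBall Q df D x)) (probBall Q df D x) := by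
  classical
  have hmix : ∀ x, (0 < probBall Q df D x ∧ probBall Q df D x < 1) →
      isPMF (mixK Q df D ε x) ∧
      probBall (mixK Q df D ε x) df D x = max (1 - ε) (probBall Q df D x) ∧
      klDiv (mixK Q df D ε x) Q
        = bdiv (max (1 - ε) (probBall Q df D x)) (probBall Q df D x) := by
    intro x hx
    exact mix_lemma Q hQ df D x _ _ hx.1 hx.2
      (lt_of_lt_of_le (by linarith) (le_max_left _ _))
      (max_le (by linarith) (probBall_le_one Q hQ df D x))
      (fun y => by unfold mixK; rw [if_pos hx])
  have hdegen : ∀ x, ¬(0 < probBall Q df D x ∧ probBall Q df D x < 1) →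
      mixK Q df D ε x = Q := by
    intro x hx
    funext y
    unfold mixK
    rw [if_neg hx]
  have hKpmf : ∀ x, isPMF (mixK Q df D ε x) := by
    intro x
    by_cases hx : 0 < probBall Q df D x ∧ probBall Q df D x < 1
    · exact (hmix x hx).1
    · rw [hdegen x hx]; exact hQ
  have hone : ∀ x, 0 < p x → ¬(0 < probBall Q df D x ∧ probBall Q df D x < 1) →
      probBall Q df D x = 1 := by
    intro x hpx hx
    rcases lt_or_ge (probBall Q df D x) 1 with h | h
    · exact absurd ⟨hQpos x hpx, h⟩ hx
    · linarith [probBall_le_one Q hQ df D x]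
  have hKcon : ∀ x, 0 < p x → 1 - ε ≤ probBall (mixK Q df D ε x) df D x := by
    intro x hpx
    by_cases hx : 0 < probBall Q df D x ∧ probBall Q df D x < 1
    · rw [(hmix x hx).2.1]; exact le_max_left _ _
    · rw [hdegen x hx, hone x hpx hx]; linarith
  have hsupp : ∀ x y, Q y = 0 → mixK Q df D ε x y = 0 := by
    intro x y h
    unfold mixK
    split_ifs with hx h2 <;> simp [h]
  have hval : ∀ x, p x * klDiv (mixK Q df D ε x) Q =
      p x * bdiv (max (1 - ε) (probBall Q df D x)) (probBall Q df D x) := by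
    intro x
    rcases eq_or_lt_of_le (hp.1 x) with hpx | hpx
    · rw [← hpx, zero_mul, zero_mul]
    congr 1
    by_cases hx : 0 < probBall Q df D x ∧ probBall Q df D x < 1
    · exact (hmix x hx).2.2
    · rw [hdegen x hx, hone x hpx hx, klDiv_self', max_eq_right (by linarith : 1 - ε ≤ 1),
        bdiv_one_one]
  have hbdd : BddBelow {r : ℝ | ∃ K' : X → Y → ℝ, (∀ x, isPMF (K' x)) ∧
      (∀ x, 0 < p x → 1 - ε ≤ probBall (K' x) df D x) ∧ r = mutInfo p K'} := by
    refine ⟨0, ?_⟩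
    rintro r ⟨K'', hK'', -, rfl⟩
    exact mutInfo_nonneg' p K'' hp hK''
  have hmem : mutInfo p (mixK Q df D ε) ∈ {r : ℝ | ∃ K' : X → Y → ℝ, (∀ x, isPMF (K' x)) ∧
      (∀ x, 0 < p x → 1 - ε ≤ probBall (K' x) df D x) ∧ r = mutInfo p K'} :=
    ⟨mixK Q df D ε, hKpmf, hKcon, rfl⟩
  calc sInf {r : ℝ | ∃ K' : X → Y → ℝ, (∀ x, isPMF (K' x)) ∧
        (∀ x, 0 < p x → 1 - ε ≤ probBall (K' x) df D x) ∧ r = mutInfo p K'}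
      ≤ mutInfo p (mixK Q df D ε) := csInf_le hbdd hmem
    _ ≤ ∑ x, p x * klDiv (mixK Q df D ε x) Q := golden p (mixK Q df D ε) Q hp hKpmf hQ hsupp
    _ = ∑ x, p x * bdiv (max (1 - ε) (probBall Q df D x)) (probBall Q df D x) :=
        Finset.sum_congr rfl fun x _ => hval x

end Aux

/-- achievability for conditional excess distortion. Given a pmf `Q` with
`0 < Q(B_D(x)) < 1` for all `x`, the kernel `K` putting mass `α_Q(x)` on `Q` restricted
to `B_D(x)` (normalized) and mass `1 - α_Q(x)` on `Q` restricted to the complement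
(normalized), with `α_Q(x) = max (1-ε) (Q(B_D(x)))`, is a pmf kernel with
`K(x)(B_D(x)ᶜ) ≤ ε` and `D(K(x)‖Q) = d(α_Q(x)‖Q(B_D(x)))`; hence
`R_X^c(d,ε) ≤ E[d(α_Q(X)‖Q(B_D(X)))]`, and so `R_X^c(d,ε) ≤ R_X^{c,+}(d,ε)`. -/
theorem cond_excess_achievability {X Y : Type*} [Fintype X] [Fintype Y] [Nonempty Y]
    (p : X → ℝ) (df : X → Y → ℝ) (D ε : ℝ) (hε0 : 0 < ε) (hε1 : ε < 1)
    (hp : isPMF p) (Q : Y → ℝ) (hQ : isPMF Q)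
    (hQB : ∀ x : X, 0 < probBall Q df D x ∧ probBall Q df D x < 1)
    (K : X → Y → ℝ)
    (hKdef : ∀ x y, K x y =
        max (1 - ε) (probBall Q df D x) *
            (if df x y ≤ D then Q y else 0) / probBall Q df D x +
          (1 - max (1 - ε) (probBall Q df D x)) *
            (if df x y ≤ D then 0 else Q y) / (1 - probBall Q df D x)) :
    (∀ x, isPMF (K x) ∧ 1 - probBall (K x) df D x ≤ ε ∧
        klDiv (K x) Q =
          bdiv (max (1 - ε) (probBall Q df D x)) (probBall Q df D x)) ∧
    sInf {r : ℝ | ∃ K' : X → Y → ℝ, (∀ x, isPMF (K' x)) ∧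
        (∀ x, 0 < p x → 1 - ε ≤ probBall (K' x) df D x) ∧ r = mutInfo p K'} ≤
      ∑ x, p x * bdiv (max (1 - ε) (probBall Q df D x)) (probBall Q df D x) ∧
    sInf {r : ℝ | ∃ K' : X → Y → ℝ, (∀ x, isPMF (K' x)) ∧
        (∀ x, 0 < p x → 1 - ε ≤ probBall (K' x) df D x) ∧ r = mutInfo p K'} ≤
      sInf {r : ℝ | ∃ Q' : Y → ℝ, isPMF Q' ∧ (∀ x, 0 < p x → 0 < probBall Q' df D x) ∧
        r = ∑ x, p x *
          bdiv (max (1 - ε) (probBall Q' df D x)) (probBall Q' df D x)} := by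
  refine ⟨?_, ?_, ?_⟩
  · intro x
    have ha0 : 0 < max (1 - ε) (probBall Q df D x) :=
      lt_of_lt_of_le (by linarith) (le_max_left _ _)
    have ha1 : max (1 - ε) (probBall Q df D x) ≤ 1 :=
      max_le (by linarith) (probBall_le_one Q hQ df D x)
    obtain ⟨h1, h2, h3⟩ :=
      mix_lemma Q hQ df D x _ (K x) (hQB x).1 (hQB x).2 ha0 ha1 (hKdef x)
    refine ⟨h1, ?_, h3⟩
    rw [h2]
    have := le_max_left (1 - ε) (probBall Q df D x)
    linarith
  · exact key_lemma p df D ε hε0 hε1 hp Q hQ (fun x _ => (hQB x).1)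
  · apply le_csInf
    · exact ⟨∑ x, p x * bdiv (max (1 - ε) (probBall Q df D x)) (probBall Q df D x),
        Q, hQ, fun x _ => (hQB x).1, rfl⟩
    · rintro r ⟨Q', hQ', hQ'pos, rfl⟩
      exact key_lemma p df D ε hε0 hε1 hp Q' hQ' hQ'pos
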